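/- Suppose x₁, x₄ : ℝ → ℝ are differentiable, x₂, x₆ : ℝ → ℝ are continuous, x₁'(t) = x₂(t)(x₁(t)² − x₄(t)²), x₄'(t) = x₆(t)(x₁(t)² − x₄(t)²), and x₁(0)² ≠ x₄(0)². Then x₁(t)² ≠ x₄(t)² for all t ∈ ℝ. -/

import Mathlib

theorem stmt18 (x₁ x₂ x₄ x₆ : ℝ → ℝ)
    (h2 : Continuous x₂) (h6 : Continuous x₆)
    (hd1 : ∀ t, HasDerivAt x₁ (x₂ t * (x₁ t ^ 2 - x₄ t ^ 2)) t)
    (hd4 : ∀ t, HasDerivAt x₄ (x₆ t * (x₁ t ^ 2 - x₄ t ^ 2)) t)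
    (h0 : x₁ 0 ^ 2 ≠ x₄ 0 ^ 2) :
    ∀ t, x₁ t ^ 2 ≠ x₄ t ^ 2 := by
  set y : ℝ → ℝ := fun t => x₁ t ^ 2 - x₄ t ^ 2 with hy
  set c : ℝ → ℝ := fun t => 2 * (x₁ t * x₂ t) - 2 * (x₄ t * x₆ t) with hc
  have hx1c : Continuous x₁ := by
    rw [continuous_iff_continuousAt]; exact fun t => (hd1 t).continuousAt
  have hx4c : Continuous x₄ := by
    rw [continuous_iff_continuousAt]; exact fun t => (hd4 t).continuousAt
  have hcc : Continuous c := by continuity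
  have hdy : ∀ t, HasDerivAt y (c t * y t) t := by
    intro t
    have := (((hd1 t).pow 2).sub ((hd4 t).pow 2))
    convert this using 1
    · rfl
    · rfl
    · rfl
    · simp only [hy, hc]
      ring
  set C : ℝ → ℝ := fun t => ∫ s in (0:ℝ)..t, c s with hC
  have hdC : ∀ t, HasDerivAt C (c t) t := fun t =>
    (hcc.integral_hasStrictDerivAt 0 t).hasDerivAt
  set g : ℝ → ℝ := fun t => y t * Real.exp (-C t) with hg
  have hdg : ∀ t, HasDerivAt g 0 t := by
    intro t
    have h1 : HasDerivAt (fun t => Real.exp (-C t)) (Real.exp (-C t) * (-c t)) t :=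
      (((hdC t).neg).exp)
    have := (hdy t).mul h1
    convert this using 1
    · rfl
    · rfl
    · rfl
    · ring
  have hconst : ∀ t, g t = g 0 := by
    intro t
    have : ∀ s, deriv g s = 0 := fun s => (hdg s).deriv
    have hdiff : Differentiable ℝ g := fun s => (hdg s).differentiableAt
    exact is_const_of_deriv_eq_zero hdiff this t 0
  intro t ht
  have hgt : g t = 0 := by simp [hg, hy, sub_eq_zero.mpr ht]
  have hg0 : g 0 ≠ 0 := by
    simp only [hg, hy]
    exact mul_ne_zero (sub_ne_zero.mpr h0) (Real.exp_ne_zero _)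
  exact hg0 (by rw [← hconst t, hgt])
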